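/- Let b ≥ 2 be an integer and q ≥ 3 a prime dividing both n and d (n, d positive integers). Suppose p is an odd prime divisor of b^q - 1 with ord_p(b) = q. Then ν_p((b^n - 1)(b^d - 1)) > ν_p((b^{nd} - 1)(b - 1)), where ν_p denotes the p-adic valuation. Hence (b^n - 1)(b^d - 1) does not divide (b^{nd} - 1)(b - 1). -/
import Mathlib


theorem stmt_10 (b n d q p : ℕ) (hb : 2 ≤ b) (hn : 0 < n) (hd : 0 < d)
    (hq : q.Prime) (hq3 : 3 ≤ q) (hqn : q ∣ n) (hqd : q ∣ d)
    (hp : p.Prime) (hpodd : p ≠ 2) (hpb : p ∣ b ^ q - 1)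
    (hord : orderOf (b : ZMod p) = q) :
    padicValNat p ((b ^ n - 1) * (b ^ d - 1)) >
        padicValNat p ((b ^ (n * d) - 1) * (b - 1)) ∧
      ¬ ((b ^ n - 1) * (b ^ d - 1) ∣ (b ^ (n * d) - 1) * (b - 1)) := by
  haveI : Fact p.Prime := ⟨hp⟩
  have hpodd' : Odd p := hp.odd_of_ne_two hpodd
  have hbq : 1 < b ^ q := Nat.one_lt_pow (by omega) hb
  -- p does not divide b ^ q
  have hpnb : ¬ p ∣ b ^ q := by
    intro h
    have : p ∣ 1 := by
      have := Nat.dvd_sub h hpb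
      simpa [Nat.sub_sub_self (le_of_lt hbq)] using this
    have := Nat.le_of_dvd one_pos this
    have := hp.two_le
    omega
  -- p does not divide b
  have hpnb' : ¬ p ∣ b := fun h => hpnb (dvd_pow h (by omega))
  -- p ≠ q
  have hbne : (b : ZMod p) ≠ 0 := by
    rwa [Ne, ZMod.natCast_eq_zero_iff]
  have hqp1 : q ∣ p - 1 := hord ▸ ZMod.orderOf_dvd_card_sub_one hbne
  have hpq : ¬ p ∣ q := by
    intro h
    have hpq' : p = q := (Nat.prime_dvd_prime_iff_eq hp hq).mp h
    have : q ≤ p - 1 := Nat.le_of_dvd (by have := hp.two_le; omega) hqp1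
    omega
  -- p does not divide b - 1
  have hpb1 : ¬ p ∣ b - 1 := by
    intro h
    have hb1 : ((b - 1 : ℕ) : ZMod p) = 0 := (ZMod.natCast_eq_zero_iff _ _).mpr h
    have : (b : ZMod p) = 1 := by
      have : b = (b - 1) + 1 := by omega
      rw [this, Nat.cast_add, hb1, Nat.cast_one, zero_add]
    rw [this, orderOf_one] at hord
    omega
  -- key LTE identity
  have key : ∀ m : ℕ, m ≠ 0 →
      padicValNat p (b ^ (q * m) - 1) = padicValNat p (b ^ q - 1) + padicValNat p m := by
    intro m hm
    have := padicValNat.pow_sub_pow (x := b ^ q) (y := 1) hpodd' hbq (by simpa using hpb)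
      hpnb hm
    simpa [pow_mul] using this
  obtain ⟨n', rfl⟩ := hqn
  obtain ⟨d', rfl⟩ := hqd
  have hn' : n' ≠ 0 := by rintro rfl; simp at hn
  have hd' : d' ≠ 0 := by rintro rfl; simp at hd
  set E := padicValNat p (b ^ q - 1) with hE
  have hE1 : 1 ≤ E := one_le_padicValNat_of_dvd (by omega) hpb
  have h1 : padicValNat p (b ^ (q * n') - 1) = E + padicValNat p n' := key n' hn'
  have h2 : padicValNat p (b ^ (q * d') - 1) = E + padicValNat p d' := key d' hd'
  have h3 : padicValNat p (b ^ (q * n' * (q * d')) - 1)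
      = E + padicValNat p n' + padicValNat p d' := by
    have heq : q * n' * (q * d') = q * (n' * (q * d')) := by ring
    rw [heq, key _ (by positivity),
      padicValNat.mul hn' (by positivity), padicValNat.mul (by omega) hd',
      padicValNat.eq_zero_of_not_dvd hpq]
    ring
  have hq0 : padicValNat p (b - 1) = 0 := padicValNat.eq_zero_of_not_dvd hpb1
  have hx1 : b ^ (q * n') - 1 ≠ 0 := by
    have : 1 < b ^ (q * n') := Nat.one_lt_pow (by positivity) hb
    omega
  have hx2 : b ^ (q * d') - 1 ≠ 0 := by
    have : 1 < b ^ (q * d') := Nat.one_lt_pow (by positivity) hb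
    omega
  have hx3 : b ^ (q * n' * (q * d')) - 1 ≠ 0 := by
    have : 1 < b ^ (q * n' * (q * d')) := Nat.one_lt_pow (by positivity) hb
    omega
  have hx4 : b - 1 ≠ 0 := by omega
  have hLHS : padicValNat p ((b ^ (q * n') - 1) * (b ^ (q * d') - 1))
      = E + padicValNat p n' + (E + padicValNat p d') := by
    rw [padicValNat.mul hx1 hx2, h1, h2]
  have hRHS : padicValNat p ((b ^ (q * n' * (q * d')) - 1) * (b - 1))
      = E + padicValNat p n' + padicValNat p d' := by
    rw [padicValNat.mul hx3 hx4, h3, hq0]; omega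
  have hgt : padicValNat p ((b ^ (q * n') - 1) * (b ^ (q * d') - 1)) >
      padicValNat p ((b ^ (q * n' * (q * d')) - 1) * (b - 1)) := by
    rw [hLHS, hRHS]; omega
  refine ⟨hgt, fun hdvd => ?_⟩
  have hBne : (b ^ (q * n' * (q * d')) - 1) * (b - 1) ≠ 0 := mul_ne_zero hx3 hx4
  have : padicValNat p ((b ^ (q * n') - 1) * (b ^ (q * d') - 1)) ≤
      padicValNat p ((b ^ (q * n' * (q * d')) - 1) * (b - 1)) := by
    rw [← padicValNat_dvd_iff_le hBne]
    exact dvd_trans (pow_padicValNat_dvd) hdvd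
  omega
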